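/- There is no 2-2-2-2-2 configuration under the Modified CFLS coloring φ in which all five color classes are paths of length 2 (i.e., in which, for each of the five colors, the two edges of that color share a vertex). -/

import Mathlib

namespace CFLS

/-- A vertex of `K_n` for `n = 2^(m^2)`: `m` blocks, each a string of `m` bits.
`x k` is the `k`-th block `x^(k+1)`, and `x k j` is its `j`-th bit (most significant first). -/
abbrev Vtx (m : ℕ) := Fin m → Fin m → Bool

/-- The `j`-th bit of a bit string (as a total function of `j : ℕ`). -/
def bitAt {N : ℕ} (f : Fin N → Bool) (j : ℕ) : Bool :=
  if h : j < N then f ⟨j, h⟩ else false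

/-- The value of a bit string read as a binary integer, most significant bit first. -/
def strToNat {N : ℕ} (f : Fin N → Bool) : ℕ :=
  ∑ j : Fin N, if f j then 2 ^ (N - 1 - j.val) else 0

/-- The `k`-th block of a vertex (as a total function of `k : ℕ`). -/
def blockAt {m : ℕ} (x : Vtx m) (k : ℕ) : Fin m → Bool :=
  if h : k < m then x ⟨k, h⟩ else fun _ => false

/-- The least block index at which `x` and `y` differ. -/
noncomputable def firstDiffBlock {m : ℕ} (x y : Vtx m) : ℕ :=
  sInf {k | blockAt x k ≠ blockAt y k}

/-- The position (1-indexed) of the first bit at which two bit strings differ; `0` if equal. -/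
noncomputable def firstDiffIdx {N : ℕ} (f g : Fin N → Bool) : ℕ :=
  if f = g then 0 else sInf {j | bitAt f j ≠ bitAt g j} + 1

/-- The value of a vertex read as a binary integer (concatenation of its blocks). -/
def vtxToNat {m : ℕ} (x : Vtx m) : ℕ :=
  ∑ k : Fin m, strToNat (x k) * (2 ^ m) ^ (m - 1 - k.val)

/-- The colors of the Modified CFLS coloring:
`((i, {x^(i), y^(i)}), i_1, …, i_m, δ_1, …, δ_m)`. -/
abbrev Color (m : ℕ) := (ℕ × Set (Fin m → Bool)) × (Fin m → ℕ) × (Fin m → ℤ)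

/-- The Modified CFLS color of the edge `xy` assuming `x ≤ y` as binary integers. -/
noncomputable def phiAux {m : ℕ} (x y : Vtx m) : Color m :=
  ((firstDiffBlock x y,
      {blockAt x (firstDiffBlock x y), blockAt y (firstDiffBlock x y)}),
   fun k => firstDiffIdx (x k) (y k),
   fun k => if strToNat (x k) ≤ strToNat (y k) then (1 : ℤ) else -1)

/-- The Modified CFLS coloring `φ`. -/
noncomputable def phi {m : ℕ} (x y : Vtx m) : Color m :=
  if vtxToNat x ≤ vtxToNat y then phiAux x y else phiAux y x

/-- The ten edges among five vertices. -/
def edgeList {m : ℕ} (a b c d e : Vtx m) : List (Vtx m × Vtx m) :=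
  [(a,b),(a,c),(a,d),(a,e),(b,c),(b,d),(b,e),(c,d),(c,e),(d,e)]

/-- The number of the ten edges among `a,b,c,d,e` receiving color `col` under `φ`. -/
noncomputable def colorCount {m : ℕ} (a b c d e : Vtx m) (col : Color m) : ℕ :=
  ((edgeList a b c d e).map fun p => phi p.1 p.2).countP fun x =>
    @decide (x = col) (Classical.propDecidable _)

/-- Five pairwise distinct vertices. -/
def Distinct5 {m : ℕ} (a b c d e : Vtx m) : Prop :=
  a ≠ b ∧ a ≠ c ∧ a ≠ d ∧ a ≠ e ∧ b ≠ c ∧ b ≠ d ∧ b ≠ e ∧ c ≠ d ∧ c ≠ e ∧ d ≠ e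

/-- `col` appears on some edge among `a,b,c,d,e`. -/
noncomputable def IsAttained {m : ℕ} (a b c d e : Vtx m) (col : Color m) : Prop :=
  colorCount a b c d e col ≠ 0

/-- A 2-2-2-2-2 configuration: five distinct vertices such that `φ` on the ten edges
among them takes exactly five values, each attained on exactly two edges. -/
def IsConfig22222 {m : ℕ} (a b c d e : Vtx m) : Prop :=
  Distinct5 a b c d e ∧
  ∀ col : Color m, colorCount a b c d e col = 0 ∨ colorCount a b c d e col = 2

/-- The color class of `col` is a matching: two vertex-disjoint edges of color `col`. -/
def IsMatchingClass {m : ℕ} (a b c d e : Vtx m) (col : Color m) : Prop :=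
  ∃ p ∈ edgeList a b c d e, ∃ q ∈ edgeList a b c d e,
    phi p.1 p.2 = col ∧ phi q.1 q.2 = col ∧
    p.1 ≠ q.1 ∧ p.1 ≠ q.2 ∧ p.2 ≠ q.1 ∧ p.2 ≠ q.2

/-- The color class of `col` is a path: two distinct edges of color `col` sharing a vertex. -/
def IsPathClass {m : ℕ} (a b c d e : Vtx m) (col : Color m) : Prop :=
  ∃ p ∈ edgeList a b c d e, ∃ q ∈ edgeList a b c d e,
    p ≠ q ∧ phi p.1 p.2 = col ∧ phi q.1 q.2 = col ∧
    (p.1 = q.1 ∨ p.1 = q.2 ∨ p.2 = q.1 ∨ p.2 = q.2)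



section Aux

lemma blockAt_coe {m : ℕ} (x : Vtx m) (k : Fin m) : blockAt x k.val = x k := by
  simp [blockAt, k.isLt]

lemma firstDiffBlock_comm {m : ℕ} (x y : Vtx m) :
    firstDiffBlock x y = firstDiffBlock y x := by
  unfold firstDiffBlock
  congr 1
  ext k
  exact ne_comm

lemma blockAt_eq_of_lt {m : ℕ} {x y : Vtx m} {k : ℕ} (h : k < firstDiffBlock x y) :
    blockAt x k = blockAt y k := by
  by_contra hne
  have : firstDiffBlock x y ≤ k := Nat.sInf_le hne
  omega

lemma blockAt_ne_self {m : ℕ} {x y : Vtx m} (h : x ≠ y) :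
    blockAt x (firstDiffBlock x y) ≠ blockAt y (firstDiffBlock x y) := by
  obtain ⟨k, hk⟩ := Function.ne_iff.mp h
  have hne : blockAt x k.val ≠ blockAt y k.val := by
    rw [blockAt_coe, blockAt_coe]; exact hk
  have hne' : {j | blockAt x j ≠ blockAt y j}.Nonempty := ⟨k.val, hne⟩
  exact Nat.sInf_mem hne'

/-- The symmetric first component of a CFLS color. -/
noncomputable def fstPart {m : ℕ} (x y : Vtx m) : ℕ × Set (Fin m → Bool) :=
  (firstDiffBlock x y,
    {blockAt x (firstDiffBlock x y), blockAt y (firstDiffBlock x y)})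

lemma fstPart_comm {m : ℕ} (x y : Vtx m) : fstPart x y = fstPart y x := by
  unfold fstPart
  rw [firstDiffBlock_comm x y, Set.pair_comm]

lemma phi_fst {m : ℕ} (x y : Vtx m) : (phi x y).1 = fstPart x y := by
  unfold phi
  split
  · rfl
  · exact fstPart_comm y x

/-- The cherry lemma: two same-colored edges sharing vertex `z` with other endpoints
`u, w` force `firstDiffBlock u w` to be strictly larger. -/
lemma cherry {m : ℕ} {z u w : Vtx m} (hzu : z ≠ u) (hzw : z ≠ w) (huw : u ≠ w)
    (h : fstPart z u = fstPart z w) :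
    firstDiffBlock z u < firstDiffBlock u w := by
  have hi : firstDiffBlock z u = firstDiffBlock z w := congrArg Prod.fst h
  have hset : ({blockAt z (firstDiffBlock z u), blockAt u (firstDiffBlock z u)} :
      Set (Fin m → Bool)) =
      {blockAt z (firstDiffBlock z u), blockAt w (firstDiffBlock z u)} := by
    have h2 := congrArg Prod.snd h
    simp only [fstPart] at h2
    rw [← hi] at h2
    exact h2
  have hzu' : blockAt z (firstDiffBlock z u) ≠ blockAt u (firstDiffBlock z u) :=
    blockAt_ne_self hzu
  have hzw' : blockAt z (firstDiffBlock z u) ≠ blockAt w (firstDiffBlock z u) := by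
    rw [hi]; exact blockAt_ne_self hzw
  have huw' : blockAt u (firstDiffBlock z u) = blockAt w (firstDiffBlock z u) := by
    have hmem : blockAt u (firstDiffBlock z u) ∈
        ({blockAt z (firstDiffBlock z u), blockAt w (firstDiffBlock z u)} :
          Set (Fin m → Bool)) := by
      rw [← hset]; right; rfl
    rcases hmem with h1 | h1
    · exact absurd h1.symm hzu'
    · exact h1
  have hmem : blockAt u (firstDiffBlock u w) ≠ blockAt w (firstDiffBlock u w) :=
    blockAt_ne_self huw
  by_contra hle
  push_neg at hle
  rcases Nat.lt_or_ge (firstDiffBlock u w) (firstDiffBlock z u) with hlt | hge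
  · have h1 : blockAt z (firstDiffBlock u w) = blockAt u (firstDiffBlock u w) :=
      blockAt_eq_of_lt hlt
    have h2 : blockAt z (firstDiffBlock u w) = blockAt w (firstDiffBlock u w) :=
      blockAt_eq_of_lt (by omega)
    exact hmem (h1 ▸ h2)
  · have heq : firstDiffBlock u w = firstDiffBlock z u := le_antisymm hle hge
    rw [heq] at hmem
    exact hmem huw'

lemma edge_ne' {m : ℕ} {a b c d e : Vtx m} (hd : Distinct5 a b c d e) :
    ∀ p ∈ edgeList a b c d e, p.1 ≠ p.2 := by
  obtain ⟨h1,h2,h3,h4,h5,h6,h7,h8,h9,h10⟩ := hd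
  intro p hp
  simp only [edgeList, List.mem_cons, List.not_mem_nil, or_false] at hp
  rcases hp with rfl|rfl|rfl|rfl|rfl|rfl|rfl|rfl|rfl|rfl <;> simp_all

lemma no_reverse {m : ℕ} {a b c d e : Vtx m} (hd : Distinct5 a b c d e) :
    ∀ p ∈ edgeList a b c d e, ∀ q ∈ edgeList a b c d e,
      p.1 = q.2 → p.2 = q.1 → False := by
  obtain ⟨h1,h2,h3,h4,h5,h6,h7,h8,h9,h10⟩ := hd
  intro p hp q hq
  simp only [edgeList, List.mem_cons, List.not_mem_nil, or_false] at hp hq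
  rcases hp with rfl|rfl|rfl|rfl|rfl|rfl|rfl|rfl|rfl|rfl <;>
    rcases hq with rfl|rfl|rfl|rfl|rfl|rfl|rfl|rfl|rfl|rfl <;>
      intro hA hB <;> simp_all

lemma comp_mem {m : ℕ} {a b c d e : Vtx m} :
    ∀ p ∈ edgeList a b c d e, p.1 ∈ [a,b,c,d,e] ∧ p.2 ∈ [a,b,c,d,e] := by
  intro p hp
  simp only [edgeList, List.mem_cons, List.not_mem_nil, or_false] at hp
  rcases hp with rfl|rfl|rfl|rfl|rfl|rfl|rfl|rfl|rfl|rfl <;> simp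

lemma exists_edge {m : ℕ} {a b c d e : Vtx m} :
    ∀ u ∈ [a,b,c,d,e], ∀ w ∈ [a,b,c,d,e], u = w ∨
      ∃ r ∈ edgeList a b c d e, r = (u, w) ∨ r = (w, u) := by
  intro u hu w hw
  simp only [List.mem_cons, List.not_mem_nil, or_false] at hu hw
  rcases hu with rfl|rfl|rfl|rfl|rfl <;> rcases hw with rfl|rfl|rfl|rfl|rfl <;>
    simp [edgeList]

/-- The final contradiction step, shared by the four vertex-sharing cases. -/
lemma final_step {m : ℕ} {a b c d e : Vtx m} {p : Vtx m × Vtx m} {z u w : Vtx m}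
    (hmax : ∀ q ∈ edgeList a b c d e, firstDiffBlock q.1 q.2 ≤ firstDiffBlock p.1 p.2)
    (hu : u ∈ [a,b,c,d,e]) (hw : w ∈ [a,b,c,d,e])
    (hzu : z ≠ u) (hzw : z ≠ w) (huw : u ≠ w)
    (h1 : fstPart z u = fstPart p.1 p.2) (h2 : fstPart z w = fstPart p.1 p.2) :
    False := by
  have hch := cherry hzu hzw huw (h1.trans h2.symm)
  have hiu : firstDiffBlock z u = firstDiffBlock p.1 p.2 := congrArg Prod.fst h1
  rcases exists_edge u hu w hw with heq | ⟨r, hrL, hr⟩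
  · exact huw heq
  · have hBr : firstDiffBlock r.1 r.2 = firstDiffBlock u w := by
      rcases hr with rfl | rfl
      · rfl
      · exact firstDiffBlock_comm w u
    have hle := hmax r hrL
    omega

end Aux

/-- There is no 2-2-2-2-2 configuration under `φ` in which all five color classes are
paths of length 2. -/
theorem no_five_paths (m : ℕ) (hm : 0 < m) :
    ¬ ∃ a b c d e : Vtx m, IsConfig22222 a b c d e ∧
      ∀ col : Color m, IsAttained a b c d e col → IsPathClass a b c d e col := by
  rintro ⟨a, b, c, d, e, ⟨hd, -⟩, hpaths⟩
  classical
  -- pick an edge maximizing firstDiffBlock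
  have hLne : (edgeList a b c d e).toFinset.Nonempty :=
    ⟨(a, b), List.mem_toFinset.mpr (by simp [edgeList])⟩
  obtain ⟨p, hpF, hpmax⟩ :=
    Finset.exists_max_image (edgeList a b c d e).toFinset
      (fun q => firstDiffBlock q.1 q.2) hLne
  have hpL : p ∈ edgeList a b c d e := List.mem_toFinset.mp hpF
  have hmax : ∀ q ∈ edgeList a b c d e,
      firstDiffBlock q.1 q.2 ≤ firstDiffBlock p.1 p.2 :=
    fun q hq => hpmax q (List.mem_toFinset.mpr hq)
  -- its color is attained
  have hatt : IsAttained a b c d e (phi p.1 p.2) := by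
    intro h0
    unfold colorCount at h0
    rw [List.countP_eq_zero] at h0
    have hmem : phi p.1 p.2 ∈ (edgeList a b c d e).map fun q => phi q.1 q.2 :=
      List.mem_map_of_mem (a := p) (f := fun q => phi q.1 q.2) hpL
    exact absurd (@decide_eq_true _ (Classical.propDecidable _) rfl) (h0 _ hmem)
  obtain ⟨P, hP, Q, hQ, hne, hcolP, hcolQ, hshare⟩ := hpaths _ hatt
  have h1 : fstPart P.1 P.2 = fstPart p.1 p.2 := by
    rw [← phi_fst, ← phi_fst, hcolP]
  have h2 : fstPart Q.1 Q.2 = fstPart p.1 p.2 := by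
    rw [← phi_fst, ← phi_fst, hcolQ]
  have hPne : P.1 ≠ P.2 := edge_ne' hd P hP
  have hQne : Q.1 ≠ Q.2 := edge_ne' hd Q hQ
  rcases hshare with hs | hs | hs | hs
  · -- P.1 = Q.1
    refine final_step hmax (comp_mem P hP).2 (comp_mem Q hQ).2 hPne
      (hs ▸ hQne) (fun h => hne (Prod.ext_iff.mpr ⟨hs, h⟩)) h1 ?_
    rw [← hs] at h2
    exact h2
  · -- P.1 = Q.2
    refine final_step hmax (comp_mem P hP).2 (comp_mem Q hQ).1 hPne
      (hs ▸ hQne.symm) (fun h => no_reverse hd P hP Q hQ hs h) h1 ?_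
    rw [fstPart_comm, ← hs] at h2
    exact h2
  · -- P.2 = Q.1
    refine final_step hmax (comp_mem P hP).1 (comp_mem Q hQ).2 hPne.symm
      (hs ▸ hQne) (fun h => no_reverse hd P hP Q hQ h hs) ?_ ?_
    · rw [fstPart_comm] at h1; exact h1
    · rw [← hs] at h2; exact h2
  · -- P.2 = Q.2
    refine final_step hmax (comp_mem P hP).1 (comp_mem Q hQ).1 hPne.symm
      (hs ▸ hQne.symm) (fun h => hne (Prod.ext_iff.mpr ⟨h, hs⟩)) ?_ ?_
    · rw [fstPart_comm] at h1; exact h1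
    · rw [fstPart_comm, ← hs] at h2; exact h2

end CFLS
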